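/- Let f : ℝ^d → ℂ be continuous and h_1, ..., h_s ∈ ℝ^d be such that the subgroup h_1 ℤ + ... + h_s ℤ is dense in ℝ^d. If Δ_{h_k}^{m+1} f = 0 identically for k = 1, ..., s, then f is a polynomial function in d real variables of total degree at most sm. -/

import Mathlib

open Finset Polynomial

namespace MontelAux

variable {M : Type*} [AddCommGroup M]

/-- Translation operator. -/
noncomputable def tr (h : M) : Module.End ℂ (M → ℂ) where
  toFun f := fun x => f (x + h)
  map_add' _ _ := rfl
  map_smul' _ _ := rfl

@[simp] lemma tr_apply (h : M) (f : M → ℂ) (x : M) : tr h f x = f (x + h) := rfl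

lemma tr_mul (a b : M) : tr a * tr b = tr (a + b) := by
  apply LinearMap.ext; intro f; funext x
  simp [tr, Module.End.mul_apply, add_assoc]

lemma tr_zero : tr (0 : M) = 1 := by
  apply LinearMap.ext; intro f; funext x; simp [tr]

lemma tr_pow (a : M) (n : ℕ) : tr a ^ n = tr (n • a) := by
  induction n with
  | zero => simp [tr_zero]
  | succ k ih => rw [pow_succ, ih, tr_mul, succ_nsmul]

lemma commute_tr (a b : M) : Commute (tr a) (tr b) := by
  unfold Commute SemiconjBy
  rw [tr_mul, tr_mul, add_comm]

/-- Difference operator. -/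
noncomputable def dl (h : M) : Module.End ℂ (M → ℂ) := tr h - 1

lemma commute_dl (a b : M) : Commute (dl a) (dl b) :=
  ((commute_tr a b).sub_left (Commute.one_left _)).sub_right (Commute.one_right _)

lemma dl_pow_apply (h : M) (ν : ℕ) (f : M → ℂ) (x : M) :
    (dl h ^ ν) f x =
      ∑ j ∈ range (ν + 1), (ν.choose j : ℂ) * (-1) ^ (ν - j) * f (x + j • h) := by
  have hc : Commute (tr h) (-1 : Module.End ℂ (M → ℂ)) := Commute.neg_one_right (tr h)
  have hexp : dl h ^ ν = ∑ j ∈ range (ν + 1),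
      tr h ^ j * (-1 : Module.End ℂ (M → ℂ)) ^ (ν - j) * (ν.choose j : Module.End ℂ (M → ℂ)) := by
    rw [dl, sub_eq_add_neg, hc.add_pow]
  rw [hexp]
  rw [LinearMap.sum_apply, Finset.sum_apply]
  refine Finset.sum_congr rfl fun j hj => ?_
  rw [tr_pow]
  have h1 : (tr (j • h) * (-1 : Module.End ℂ (M → ℂ)) ^ (ν - j) *
      (ν.choose j : Module.End ℂ (M → ℂ))) f
      = tr (j • h) (((-1 : Module.End ℂ (M → ℂ)) ^ (ν - j)) ((ν.choose j : ℕ) • f)) := by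
    simp [Module.End.mul_apply, Module.End.natCast_apply]
  have hneg : ((-1 : Module.End ℂ (M → ℂ)) ^ (ν - j)) ((ν.choose j : ℕ) • f)
      = ((-1 : ℂ) ^ (ν - j) * (ν.choose j : ℂ)) • f := by
    induction (ν - j) with
    | zero =>
        rw [pow_zero, pow_zero, Module.End.one_apply, one_mul, Nat.cast_smul_eq_nsmul]
    | succ k ih =>
        rw [pow_succ, Module.End.mul_apply,
          show (-1 : Module.End ℂ (M → ℂ)) ((ν.choose j : ℕ) • f) = -((ν.choose j : ℕ) • f)
            from rfl,
          map_neg, ih, pow_succ]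
        module
  rw [h1, hneg, tr_apply, Pi.smul_apply, smul_eq_mul]
  ring

/-- The morphism from the group algebra to endomorphisms of functions. -/
noncomputable def rho (M : Type*) [AddCommGroup M] :
    AddMonoidAlgebra ℂ M →ₐ[ℂ] Module.End ℂ (M → ℂ) :=
  AddMonoidAlgebra.lift ℂ _ M
    { toFun := fun a => tr (Multiplicative.toAdd a)
      map_one' := tr_zero
      map_mul' := fun a b => by
        show tr (Multiplicative.toAdd a + Multiplicative.toAdd b) = _
        rw [tr_mul] }

noncomputable def trS (a : M) : AddMonoidAlgebra ℂ M := AddMonoidAlgebra.single a 1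

lemma rho_trS (a : M) : rho M (trS a) = tr a := by
  rw [trS, rho, AddMonoidAlgebra.lift_single]
  simp

lemma trS_mul (a b : M) : trS a * trS b = trS (a + b) := by
  rw [trS, trS, trS, AddMonoidAlgebra.single_mul_single, one_mul]

lemma trS_zero : trS (0 : M) = 1 := rfl

lemma trS_pow (a : M) (n : ℕ) : trS a ^ n = trS (n • a) := by
  induction n with
  | zero => simp [trS_zero]
  | succ k ih => rw [pow_succ, ih, trS_mul, succ_nsmul]

noncomputable def dlS (a : M) : AddMonoidAlgebra ℂ M := trS a - 1

lemma rho_dlS (a : M) : rho M (dlS a) = dl a := by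
  rw [dlS, map_sub, map_one, rho_trS, dl]

theorem dl_pow_zero_of_mem_closure (mm s : ℕ) (f : M → ℂ) (h : Fin s → M)
    (hf : ∀ k, ((dl (h k)) ^ (mm + 1)) f = 0) :
    ∀ z ∈ AddSubgroup.closure (Set.range h), ((dl z ^ (s * mm + 1)) f) = 0 := by
  classical
  let J : Ideal (AddMonoidAlgebra ℂ M) :=
    { carrier := {u | rho M u f = 0}
      add_mem' := fun {a b} ha hb => by
        simp only [Set.mem_setOf_eq] at *
        rw [map_add, LinearMap.add_apply, ha, hb, add_zero]
      zero_mem' := by simp only [Set.mem_setOf_eq, map_zero]; rfl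
      smul_mem' := fun c u hu => by
        simp only [Set.mem_setOf_eq, smul_eq_mul] at *
        rw [map_mul, Module.End.mul_apply, hu, map_zero] }
  have memJ : ∀ u, u ∈ J ↔ rho M u f = 0 := fun u => Iff.rfl
  have hgen : ∀ k, (dlS (h k)) ^ (mm + 1) ∈ J := by
    intro k
    rw [memJ, map_pow, rho_dlS]
    exact hf k
  have hdivN : ∀ (nc : ℕ) (a : M), ∃ w, dlS (nc • a) = dlS a * w := by
    intro nc a
    refine ⟨∑ i ∈ range nc, trS a ^ i, ?_⟩
    have hg := geom_sum_mul (trS a) nc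
    unfold dlS
    rw [trS_pow] at hg
    rw [← hg]
    ring
  have hneg : ∀ b : M, dlS (-b) = dlS b * (-trS (-b)) := by
    intro b
    have h1 : trS b * trS (-b) = 1 := by rw [trS_mul, add_neg_cancel, trS_zero]
    unfold dlS
    linear_combination h1
  have hdiv : ∀ (c : ℤ) (a : M), ∃ w, dlS (c • a) = dlS a * w := by
    intro c a
    rcases Int.eq_nat_or_neg c with ⟨nc, rfl | rfl⟩
    · rw [natCast_zsmul]; exact hdivN nc a
    · rw [neg_zsmul, natCast_zsmul]
      obtain ⟨w0, hw0⟩ := hdivN nc a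
      refine ⟨w0 * (-trS (-(nc • a))), ?_⟩
      rw [hneg (nc • a), hw0]; ring
  set I : Ideal (AddMonoidAlgebra ℂ M) :=
    Ideal.span (Set.range fun k => (dlS (h k)) ^ (mm + 1)) with hI
  have hSP : ∀ (t : Finset (Fin s)) (c : Fin s → ℤ),
      (dlS (∑ k ∈ t, c k • h k)) ^ (t.card * mm + 1) ∈ I := by
    intro t
    induction t using Finset.induction_on with
    | empty =>
        intro c
        have h0 : dlS (M := M) 0 = 0 := by unfold dlS; rw [trS_zero, sub_self]
        simp [h0]
    | @insert j t hj ih =>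
        intro c
        rw [Finset.sum_insert hj]
        have hAB : dlS (c j • h j + ∑ k ∈ t, c k • h k)
            = dlS (c j • h j) * trS (∑ k ∈ t, c k • h k)
              + dlS (∑ k ∈ t, c k • h k) := by
          unfold dlS
          linear_combination (trS_mul (c j • h j) (∑ k ∈ t, c k • h k)).symm
        rw [hAB]
        have hx : (dlS (c j • h j) * trS (∑ k ∈ t, c k • h k)) ^ (mm + 1) ∈ I := by
          obtain ⟨w, hw⟩ := hdiv (c j) (h j)
          rw [hw, mul_assoc, mul_pow]
          exact Ideal.mul_mem_right _ _ (Ideal.subset_span ⟨j, rfl⟩)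
        have hy : (dlS (∑ k ∈ t, c k • h k)) ^ (t.card * mm + 1) ∈ I := ih c
        have hxy := I.add_pow_add_pred_mem_of_pow_mem hx hy
        have hexp : (mm + 1) + (t.card * mm + 1) - 1 = (insert j t).card * mm + 1 := by
          rw [Finset.card_insert_of_notMem hj]; ring_nf; omega
        rwa [hexp] at hxy
  have hrep : ∀ z ∈ AddSubgroup.closure (Set.range h), ∃ c : Fin s → ℤ,
      z = ∑ k, c k • h k := by
    let T : AddSubgroup M :=
      { carrier := {z | ∃ c : Fin s → ℤ, z = ∑ k, c k • h k}
        zero_mem' := ⟨0, by simp⟩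
        add_mem' := by
          rintro a b ⟨c1, rfl⟩ ⟨c2, rfl⟩
          exact ⟨c1 + c2, by simp [add_zsmul, Finset.sum_add_distrib]⟩
        neg_mem' := by
          rintro a ⟨c1, rfl⟩
          refine ⟨-c1, ?_⟩
          rw [← Finset.sum_neg_distrib]
          exact Finset.sum_congr rfl fun k _ => (neg_zsmul (h k) (c1 k)).symm }
    intro z hz
    have hle : AddSubgroup.closure (Set.range h) ≤ T := by
      rw [AddSubgroup.closure_le]
      rintro _ ⟨k, rfl⟩
      exact ⟨fun l => if l = k then 1 else 0, by simp [ite_smul]⟩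
    exact hle hz
  intro z hz
  obtain ⟨c, rfl⟩ := hrep z hz
  have hmem := hSP Finset.univ c
  rw [Finset.card_univ, Fintype.card_fin] at hmem
  have hJI : I ≤ J := by
    rw [hI, Ideal.span_le]
    rintro _ ⟨k, rfl⟩
    exact hgen k
  have h0 := (memJ _).1 (hJI hmem)
  rwa [map_pow, rho_dlS] at h0

/-- Polynomial difference operator with step `t`. -/
noncomputable def pd (t : ℂ) (q : ℂ[X]) : ℂ[X] := taylor t q - q

lemma pd_coeff_eq_zero (t : ℂ) (q : ℂ[X]) (k : ℕ) (hk : ∀ l, k < l → q.coeff l = 0) :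
    (pd t q).coeff k = 0 := by
  rw [pd, coeff_sub, taylor_coeff]
  have hh : hasseDeriv k q = C (q.coeff k) := by
    ext n
    rw [hasseDeriv_coeff, coeff_C]
    rcases Nat.eq_zero_or_pos n with hn | hn
    · subst hn; simp
    · have : q.coeff (n + k) = 0 := hk _ (by omega)
      simp [this, if_neg (Nat.pos_iff_ne_zero.mp hn)]
  rw [hh, eval_C, sub_self]

lemma pd_degree_lt (t : ℂ) (q : ℂ[X]) (ν : ℕ) (hq : q.degree < (ν + 1 : ℕ)) :
    (pd t q).degree < (ν : ℕ) := by
  rw [degree_lt_iff_coeff_zero]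
  intro mm hm
  refine pd_coeff_eq_zero t q mm fun l hl => ?_
  apply coeff_eq_zero_of_degree_lt
  exact lt_of_lt_of_le hq (by exact_mod_cast by omega)

lemma pd_iter_eq_zero (t : ℂ) : ∀ (ν : ℕ) (q : ℂ[X]), q.degree < (ν : ℕ) →
    (pd t)^[ν] q = 0 := by
  intro ν
  induction ν with
  | zero =>
      intro q hq
      simpa using Polynomial.degree_eq_bot.mp (by simpa using Nat.WithBot.lt_zero_iff.mp hq)
  | succ k ih =>
      intro q hq
      rw [Function.iterate_succ_apply]
      exact ih _ (pd_degree_lt t q k hq)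

/-- Evaluation as a function `ℂ → ℂ`. -/
noncomputable def pe (q : ℂ[X]) : ℂ → ℂ := fun x => q.eval x

lemma dl_pe (t : ℂ) (q : ℂ[X]) : dl t (pe q) = pe (pd t q) := by
  funext x
  show pe q (x + t) - pe q x = _
  simp only [pe, pd, eval_sub, taylor_apply, eval_comp, eval_add, eval_X, eval_C]

lemma dl_pow_pe (t : ℂ) (ν : ℕ) (q : ℂ[X]) : (dl t ^ ν) (pe q) = pe ((pd t)^[ν] q) := by
  induction ν with
  | zero => rfl
  | succ k ih =>
      rw [pow_succ', Module.End.mul_apply, ih, dl_pe, Function.iterate_succ_apply']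

lemma poly_delta (q : ℂ[X]) (ν : ℕ) (hq : q.degree < (ν : ℕ)) (t x : ℂ) :
    ∑ j ∈ range (ν + 1), (ν.choose j : ℂ) * (-1) ^ (ν - j) * q.eval (x + j • t) = 0 := by
  have h1 := dl_pow_apply t ν (pe q) x
  rw [dl_pow_pe, pd_iter_eq_zero t ν q hq] at h1
  rw [show pe (0 : ℂ[X]) x = 0 from by simp [pe]] at h1
  exact h1.symm


lemma pd_one_coeff_top (q : ℂ[X]) (hq : 1 ≤ q.natDegree) :
    (pd 1 q).coeff (q.natDegree - 1) = (q.natDegree : ℂ) * q.leadingCoeff := by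
  have hsplit : q = q.eraseLead + C q.leadingCoeff * X ^ q.natDegree :=
    (eraseLead_add_C_mul_X_pow q).symm
  have hadd : ∀ u v : ℂ[X], pd 1 (u + v) = pd 1 u + pd 1 v := by
    intro u v; simp only [pd, map_add]; ring
  have h1 : (pd 1 q.eraseLead).coeff (q.natDegree - 1) = 0 := by
    refine pd_coeff_eq_zero 1 _ _ fun l hl => ?_
    refine coeff_eq_zero_of_natDegree_lt (lt_of_le_of_lt (eraseLead_natDegree_le q) hl)
  have h2 : (pd 1 (C q.leadingCoeff * X ^ q.natDegree)).coeff (q.natDegree - 1)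
      = (q.natDegree : ℂ) * q.leadingCoeff := by
    rw [C_mul_X_pow_eq_monomial, pd, taylor_monomial, coeff_sub, coeff_monomial,
      if_neg (by omega : ¬ q.natDegree = q.natDegree - 1), sub_zero, coeff_C_mul,
      coeff_X_add_C_pow, one_pow]
    have hch : (q.natDegree).choose (q.natDegree - 1) = q.natDegree := by
      obtain ⟨k, hk⟩ : ∃ k, q.natDegree = k + 1 := ⟨q.natDegree - 1, by omega⟩
      rw [hk]
      simp [Nat.choose_succ_self_right]
    rw [hch]
    ring
  have hps : pd 1 q = pd 1 q.eraseLead + pd 1 (C q.leadingCoeff * X ^ q.natDegree) := by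
    conv_lhs => rw [hsplit]
    rw [hadd]
  rw [hps, coeff_add, h1, h2, zero_add]

lemma pd_one_natDegree (q : ℂ[X]) (hq : 1 ≤ q.natDegree) :
    pd 1 q ≠ 0 ∧ (pd 1 q).natDegree = q.natDegree - 1 := by
  have hq0 : q ≠ 0 := fun h0 => by simp [h0] at hq
  have hc := pd_one_coeff_top q hq
  have hne : (pd 1 q).coeff (q.natDegree - 1) ≠ 0 := by
    rw [hc]
    exact mul_ne_zero (Nat.cast_ne_zero.2 (by omega)) (leadingCoeff_ne_zero.2 hq0)
  refine ⟨fun h0 => hne (by simp [h0]), le_antisymm ?_ (le_natDegree_of_ne_zero hne)⟩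
  refine natDegree_le_iff_coeff_eq_zero.2 fun N hN => ?_
  exact pd_coeff_eq_zero _ _ _ fun l hl => coeff_eq_zero_of_natDegree_lt (by omega)

lemma pd_iter_ne_zero (n : ℕ) : ∀ q : ℂ[X], q ≠ 0 → n ≤ q.natDegree → (pd 1)^[n] q ≠ 0 := by
  induction n with
  | zero => intro q h0 _; simpa using h0
  | succ k ih =>
      intro q h0 hd
      rw [Function.iterate_succ_apply]
      obtain ⟨hne, hdeg⟩ := pd_one_natDegree q (by omega)
      exact ih _ hne (by omega)


lemma pd_iter_eval (t : ℂ) (ν : ℕ) (q : ℂ[X]) (x : ℂ) :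
    ((pd t)^[ν] q).eval x
      = ∑ j ∈ range (ν + 1), (ν.choose j : ℂ) * (-1) ^ (ν - j) * q.eval (x + j • t) := by
  have hE := dl_pow_apply t ν (pe q) x
  rw [dl_pow_pe] at hE
  exact hE

lemma seq_ext (ν : ℕ) (e : ℕ → ℂ)
    (hrec : ∀ k : ℕ, ∑ j ∈ range (ν + 1), (ν.choose j : ℂ) * (-1) ^ (ν - j) * e (k + j) = 0)
    (hinit : ∀ j < ν, e j = 0) : ∀ j, e j = 0 := by
  intro j
  induction j using Nat.strong_induction_on with
  | _ j ih =>
    by_cases hj : j < ν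
    · exact hinit j hj
    · have hk := hrec (j - ν)
      rw [Finset.sum_range_succ] at hk
      have hz : ∀ i ∈ range ν, (ν.choose i : ℂ) * (-1) ^ (ν - i) * e (j - ν + i) = 0 := by
        intro i hi
        rw [ih (j - ν + i) (by rw [mem_range] at hi; omega), mul_zero]
      rw [Finset.sum_eq_zero hz, zero_add, Nat.choose_self, Nat.sub_self, pow_zero,
        Nat.cast_one, one_mul, one_mul] at hk
      rwa [show j - ν + ν = j from by omega] at hk

lemma grid_poly (ν : ℕ) (g : ℝ → ℂ)
    (hrec : ∀ t x : ℝ,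
      ∑ j ∈ range (ν + 1), (ν.choose j : ℂ) * (-1) ^ (ν - j) * g (x + j • t) = 0)
    (a t : ℝ) : ∀ j : ℕ,
      g (a + j * t) = (Lagrange.interpolate (range ν) (Nat.cast : ℕ → ℂ)
        (fun i => g (a + i * t))).eval (j : ℂ) := by
  set r := Lagrange.interpolate (range ν) (Nat.cast : ℕ → ℂ) (fun i => g (a + i * t)) with hr
  have hinj : Set.InjOn (Nat.cast : ℕ → ℂ) (range ν) := fun x _ y _ hxy => Nat.cast_injective hxy
  have hdeg : r.degree < (ν : ℕ) := by
    simpa only [Finset.card_range] using Lagrange.degree_interpolate_lt _ hinj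
  have h0 : ∀ j : ℕ, g (a + j * t) - r.eval (j : ℂ) = 0 := by
    apply seq_ext ν
    · intro k
      have hu : ∑ j ∈ range (ν + 1), (ν.choose j : ℂ) * (-1) ^ (ν - j)
          * g (a + ((k : ℝ) + (j : ℝ)) * t) = 0 := by
        rw [← hrec t (a + k * t)]
        refine Finset.sum_congr rfl fun j _ => ?_
        congr 2
        push_cast [nsmul_eq_mul]
        ring
      have hw : ∑ j ∈ range (ν + 1), (ν.choose j : ℂ) * (-1) ^ (ν - j)
          * r.eval (((k + j : ℕ) : ℂ)) = 0 := by
        rw [← poly_delta r ν hdeg 1 (k : ℂ)]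
        refine Finset.sum_congr rfl fun j _ => ?_
        congr 2
        push_cast [nsmul_eq_mul]
        ring
      have hsplit : ∀ j : ℕ, (ν.choose j : ℂ) * (-1) ^ (ν - j)
            * (g (a + ((k + j : ℕ) : ℝ) * t) - r.eval ((k + j : ℕ) : ℂ))
          = (ν.choose j : ℂ) * (-1) ^ (ν - j) * g (a + ((k + j : ℕ) : ℝ) * t)
            - (ν.choose j : ℂ) * (-1) ^ (ν - j) * r.eval ((k + j : ℕ) : ℂ) := by
        intro j; ring
      calc (∑ j ∈ range (ν + 1), (ν.choose j : ℂ) * (-1) ^ (ν - j)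
            * (g (a + ((k + j : ℕ) : ℝ) * t) - r.eval ((k + j : ℕ) : ℂ)))
          = ∑ j ∈ range (ν + 1), ((ν.choose j : ℂ) * (-1) ^ (ν - j)
              * g (a + ((k + j : ℕ) : ℝ) * t)
            - (ν.choose j : ℂ) * (-1) ^ (ν - j) * r.eval ((k + j : ℕ) : ℂ)) :=
            Finset.sum_congr rfl fun j _ => hsplit j
        _ = 0 := by
            rw [Finset.sum_sub_distrib]
            have hu' : ∑ j ∈ range (ν + 1), (ν.choose j : ℂ) * (-1) ^ (ν - j)
                * g (a + ((k + j : ℕ) : ℝ) * t) = 0 := by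
              rw [← hu]
              refine Finset.sum_congr rfl fun j _ => ?_
              congr 2
              push_cast
              ring
            rw [hu', hw, sub_zero]
    · intro j hj
      rw [hr, Lagrange.eval_interpolate_at_node _ hinj (mem_range.2 hj), sub_self]
  intro j
  exact sub_eq_zero.mp (h0 j)

theorem oneD (ν : ℕ) (g : ℝ → ℂ) (hg : Continuous g)
    (hrec : ∀ t x : ℝ,
      ∑ j ∈ range (ν + 1), (ν.choose j : ℂ) * (-1) ^ (ν - j) * g (x + j • t) = 0) :
    ∀ y : ℝ, g y = (Lagrange.interpolate (range ν) (Nat.cast : ℕ → ℂ)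
      (fun i => g i)).eval (y : ℂ) := by
  have hinj : Set.InjOn (Nat.cast : ℕ → ℂ) (range ν) := fun x _ y _ hxy => Nat.cast_injective hxy
  set p := Lagrange.interpolate (range ν) (Nat.cast : ℕ → ℂ) (fun i => g i) with hp
  -- Step A: naturals
  have hA : ∀ j : ℕ, g j = p.eval (j : ℂ) := by
    intro j
    have hgr := grid_poly ν g hrec 0 1 j
    have harg : (fun i : ℕ => g (0 + i * 1)) = fun i : ℕ => g i := by
      funext i; norm_num
    rw [harg] at hgr
    rw [show ((j : ℝ)) = 0 + j * 1 by ring]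
    exact hgr
  -- Step B: integers
  have hB : ∀ z : ℤ, g z = p.eval (z : ℂ) := by
    intro z
    set Mn : ℕ := z.natAbs with hM
    have hgrid := grid_poly ν g hrec (-(Mn : ℝ)) 1
    set r := Lagrange.interpolate (range ν) (Nat.cast : ℕ → ℂ)
      (fun i => g (-(Mn : ℝ) + i * 1)) with hrr
    have hagree : r = p.comp (X - C (Mn : ℂ)) := by
      apply Polynomial.eq_of_infinite_eval_eq
      refine Set.Infinite.mono ?_
        (((Set.Ici_infinite Mn).image (fun x hx y hy hxy => Nat.cast_injective hxy)) :
          ((Nat.cast : ℕ → ℂ) '' Set.Ici Mn).Infinite)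
      rintro _ ⟨j, hj, rfl⟩
      simp only [Set.mem_setOf_eq]
      have hj' : Mn ≤ j := hj
      have h1 : (-(Mn : ℝ) + j * 1) = ((j - Mn : ℕ) : ℝ) := by
        push_cast [Nat.cast_sub hj']
        ring
      rw [← hgrid j, h1, hA (j - Mn), eval_comp, eval_sub, eval_X, eval_C,
        Nat.cast_sub hj']
    have hz : (0 : ℤ) ≤ z + Mn := by
      rcases Int.natAbs_eq z with hh | hh <;> omega
    set j : ℕ := (z + Mn).toNat with hjdef
    have hjz : (j : ℤ) = z + Mn := Int.toNat_of_nonneg hz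
    have hgj := hgrid j
    rw [hagree] at hgj
    have harg2 : (-(Mn : ℝ) + j * 1) = (z : ℝ) := by
      have : (j : ℝ) = (z : ℝ) + Mn := by exact_mod_cast congrArg (Int.cast : ℤ → ℝ) hjz
      rw [this]; ring
    have harg3 : ((j : ℂ)) - (Mn : ℂ) = (z : ℂ) := by
      have : (j : ℂ) = (z : ℂ) + Mn := by exact_mod_cast congrArg (Int.cast : ℤ → ℂ) hjz
      rw [this]; ring
    rw [harg2, eval_comp, eval_sub, eval_X, eval_C, harg3] at hgj
    exact hgj
  -- Step C: rationals
  have hC : ∀ (z : ℤ) (q : ℕ), 1 ≤ q → g ((z : ℝ) / q) = p.eval ((z : ℂ) / q) := by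
    intro z q hq1
    have hq0R : (q : ℝ) ≠ 0 := by positivity
    have hq0C : (q : ℂ) ≠ 0 := by
      exact_mod_cast Nat.cast_ne_zero.mpr (by omega)
    have hgrid := grid_poly ν g hrec ((z : ℝ) / q) (1 / q)
    set r := Lagrange.interpolate (range ν) (Nat.cast : ℕ → ℂ)
      (fun i => g ((z : ℝ) / q + i * (1 / q))) with hrr
    set B := p.comp (C ((z : ℂ) / q) + X * C (1 / (q : ℂ))) with hBdef
    set ψ : ℕ → ℕ := fun i => ((q : ℤ) * i - z).toNat with hψ
    have hψcast : ∀ i : ℕ, z.toNat ≤ i → ((ψ i : ℕ) : ℤ) = (q : ℤ) * i - z := by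
      intro i hi
      refine Int.toNat_of_nonneg ?_
      have h1 : (z : ℤ) ≤ i := le_trans (Int.self_le_toNat z) (by exact_mod_cast hi)
      have h2 : (i : ℤ) ≤ (q : ℤ) * i := le_mul_of_one_le_left (by positivity) (by exact_mod_cast hq1)
      omega
    have hagree : r = B := by
      apply Polynomial.eq_of_infinite_eval_eq
      have hinj2 : Set.InjOn (fun i : ℕ => ((ψ i : ℕ) : ℂ)) (Set.Ici z.toNat) := by
        intro i hi i' hi' hii
        have e1 : ((ψ i : ℕ) : ℤ) = ((ψ i' : ℕ) : ℤ) := by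
          exact_mod_cast Nat.cast_injective (R := ℂ) hii
        rw [hψcast i hi, hψcast i' hi'] at e1
        have : (q : ℤ) * i = (q : ℤ) * i' := by omega
        exact_mod_cast mul_left_cancel₀ (by exact_mod_cast (by omega : q ≠ 0)) this
      refine Set.Infinite.mono ?_ ((Set.Ici_infinite z.toNat).image hinj2)
      rintro _ ⟨i, hi, rfl⟩
      simp only [Set.mem_setOf_eq]
      have hci : ((ψ i : ℕ) : ℝ) = (q : ℝ) * i - z := by
        exact_mod_cast congrArg (Int.cast : ℤ → ℝ) (hψcast i hi)
      have hciC : ((ψ i : ℕ) : ℂ) = (q : ℂ) * i - z := by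
        exact_mod_cast congrArg (Int.cast : ℤ → ℂ) (hψcast i hi)
      have harg : ((z : ℝ) / q + (ψ i) * (1 / q)) = (i : ℝ) := by
        rw [hci]; field_simp; ring
      rw [← hgrid (ψ i), harg, hA i, hBdef, eval_comp, eval_add, eval_mul, eval_X, eval_C,
        eval_C, hciC]
      congr 1
      field_simp
      ring
    have hg0 := hgrid 0
    rw [hagree] at hg0
    rw [show ((z : ℝ) / q + (0 : ℕ) * (1 / q)) = (z : ℝ) / q by push_cast; ring] at hg0
    rw [hg0, hBdef, eval_comp]
    norm_num
  -- Step D: density of rationals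
  intro y
  have hcont2 : Continuous fun x : ℝ => p.eval (x : ℂ) :=
    p.continuous.comp Complex.continuous_ofReal
  have heq : Set.EqOn g (fun x : ℝ => p.eval (x : ℂ)) (Set.range (Rat.cast : ℚ → ℝ)) := by
    rintro _ ⟨ρ, rfl⟩
    have hden : 1 ≤ ρ.den := ρ.pos
    have hcast : (ρ : ℝ) = (ρ.num : ℝ) / (ρ.den : ℝ) := by rw [Rat.cast_def]
    have := hC ρ.num ρ.den hden
    simp only
    rw [hcast, this]
    congr 1
    push_cast
    ring
  exact congrFun (Continuous.ext_on Rat.denseRange_cast hg hcont2 heq) y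

lemma mv_eq_zero_of_real : ∀ (k : ℕ) (P : MvPolynomial (Fin k) ℂ),
    (∀ v : Fin k → ℝ, MvPolynomial.eval (fun i => (v i : ℂ)) P = 0) → P = 0 := by
  intro k
  induction k with
  | zero =>
      intro P hP
      rw [MvPolynomial.eq_C_of_isEmpty P]
      have h0 := hP (fun i => 0)
      rw [MvPolynomial.eq_C_of_isEmpty P, MvPolynomial.eval_C] at h0
      rw [h0, map_zero]
  | succ kk ih =>
      intro P hP
      set Q := MvPolynomial.finSuccEquiv ℂ kk P with hQ
      have hcoeff : ∀ n : ℕ, Q.coeff n = 0 := by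
        intro n
        apply ih
        intro w
        have hall : ∀ y : ℝ,
            (Q.map (MvPolynomial.eval (fun i => (w i : ℂ)))).eval (y : ℂ) = 0 := by
          intro y
          have hcons : (fun i => ((Fin.cons y w : Fin (kk+1) → ℝ) i : ℂ))
              = Fin.cons (y : ℂ) (fun i => (w i : ℂ)) := by
            funext i
            refine Fin.cases ?_ ?_ i <;> simp
          have := hP (Fin.cons y w)
          rw [hcons, MvPolynomial.eval_eq_eval_mv_eval'] at this
          exact this
        have hR : Q.map (MvPolynomial.eval fun i => (w i : ℂ)) = 0 := by
          apply Polynomial.eq_zero_of_infinite_isRoot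
          refine Set.Infinite.mono ?_
            ((Set.infinite_univ (α := ℝ)).image
              (fun a _ b _ hc => Complex.ofReal_injective hc))
          rintro _ ⟨y, -, rfl⟩
          exact hall y
        have hc := congrArg (fun r => Polynomial.coeff r n) hR
        simpa [Polynomial.coeff_map] using hc
      have hQ0 : Q = 0 := Polynomial.ext fun n => by simp [hcoeff n]
      exact (MvPolynomial.finSuccEquiv ℂ kk).injective (by rw [← hQ, hQ0, map_zero])

lemma eval_toMv (dd : ℕ) (v : Fin (dd + 1) → ℂ) (B : ℂ[X]) :
    MvPolynomial.eval v (Polynomial.eval₂ MvPolynomial.C (MvPolynomial.X (Fin.last dd)) B)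
      = B.eval (v (Fin.last dd)) := by
  rw [Polynomial.hom_eval₂]
  have h2 : (MvPolynomial.eval v).comp (MvPolynomial.C : ℂ →+* MvPolynomial (Fin (dd+1)) ℂ)
      = RingHom.id ℂ := RingHom.ext fun a => by simp
  rw [h2]
  rw [MvPolynomial.eval_X]; rfl

theorem mult : ∀ (d : ℕ) (ν : ℕ) (f : (Fin d → ℝ) → ℂ), Continuous f →
    (∀ (t x : Fin d → ℝ),
      ∑ j ∈ range (ν + 1), (ν.choose j : ℂ) * (-1) ^ (ν - j) * f (x + j • t) = 0) →
    ∃ P : MvPolynomial (Fin d) ℂ, ∀ x, f x = MvPolynomial.eval (fun i => (x i : ℂ)) P := by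
  intro d
  induction d with
  | zero =>
      intro ν f _ _
      refine ⟨MvPolynomial.C (f (fun i => i.elim0)), fun x => ?_⟩
      rw [MvPolynomial.eval_C]
      exact congrArg f (funext fun i => i.elim0)
  | succ dd ih =>
      intro ν f hc hrec
      have hsnoc_cont : ∀ c : ℝ, Continuous fun x : Fin dd → ℝ =>
          (Fin.snoc x c : Fin (dd + 1) → ℝ) := by
        intro c
        apply continuous_pi
        intro j
        refine Fin.lastCases ?_ ?_ j
        · simpa [Fin.snoc_last] using continuous_const
        · intro i; simpa [Fin.snoc_castSucc] using continuous_apply i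
      have hsnoc_cont1 : ∀ x : Fin dd → ℝ, Continuous fun y : ℝ =>
          (Fin.snoc x y : Fin (dd + 1) → ℝ) := by
        intro x
        apply continuous_pi
        intro j
        refine Fin.lastCases ?_ ?_ j
        · simpa [Fin.snoc_last] using continuous_id'
        · intro i; simpa [Fin.snoc_castSucc] using continuous_const
      have hsnoc_add : ∀ (x t : Fin dd → ℝ) (u v : ℝ) (j : ℕ),
          (Fin.snoc x u : Fin (dd + 1) → ℝ) + j • (Fin.snoc t v)
            = Fin.snoc (x + j • t) (u + j • v) := by
        intro x t u v j
        funext l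
        refine Fin.lastCases ?_ ?_ l
        · simp [Fin.snoc_last]
        · intro i; simp [Fin.snoc_castSucc]
      set g : ℕ → (Fin dd → ℝ) → ℂ := fun i x => f (Fin.snoc x (i : ℝ)) with hg
      have hgcont : ∀ i, Continuous (g i) := fun i => hc.comp (hsnoc_cont _)
      have hgrec : ∀ (i : ℕ) (t x : Fin dd → ℝ),
          ∑ j ∈ range (ν + 1), (ν.choose j : ℂ) * (-1) ^ (ν - j) * g i (x + j • t) = 0 := by
        intro i t x
        have hh := hrec (Fin.snoc t 0) (Fin.snoc x (i : ℝ))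
        rw [← hh]
        refine Finset.sum_congr rfl fun j _ => ?_
        congr 2
        rw [hsnoc_add]
        congr 1
        simp [hg]
      choose Pf hPf using fun i : ℕ => ih ν (g i) (hgcont i) (hgrec i)
      have hone : ∀ (x : Fin dd → ℝ) (y : ℝ), f (Fin.snoc x y)
          = (Lagrange.interpolate (range ν) (Nat.cast : ℕ → ℂ)
              (fun i => g i x)).eval (y : ℂ) := by
        intro x y
        have h1d := oneD ν (fun y' => f (Fin.snoc x y')) (hc.comp (hsnoc_cont1 x))
          (fun t y' => by
            have hh := hrec (Fin.snoc 0 t) (Fin.snoc x y')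
            rw [← hh]
            refine Finset.sum_congr rfl fun j _ => ?_
            congr 2
            rw [hsnoc_add]
            congr 1
            simp) y
        exact h1d
      refine ⟨∑ i ∈ range ν, (MvPolynomial.rename Fin.castSucc (Pf i))
          * Polynomial.eval₂ MvPolynomial.C (MvPolynomial.X (Fin.last dd))
            (Lagrange.basis (range ν) (Nat.cast : ℕ → ℂ) i), fun z => ?_⟩
      rw [map_sum]
      have hzdecomp : f z = f (Fin.snoc (Fin.init z) (z (Fin.last dd))) := by
        rw [Fin.snoc_init_self]
      rw [hzdecomp, hone (Fin.init z) (z (Fin.last dd)), Lagrange.interpolate_apply,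
        Polynomial.eval_finset_sum]
      refine Finset.sum_congr rfl fun i _ => ?_
      rw [map_mul, eval_toMv, Polynomial.eval_mul, Polynomial.eval_C,
        MvPolynomial.eval_rename]
      rw [show ((fun l => ((z l : ℝ) : ℂ)) ∘ Fin.castSucc) = fun l => ((Fin.init z l : ℝ) : ℂ)
        from rfl]
      rw [← hPf i (Fin.init z)]
  
lemma aeval_line_coeff (d : ℕ) (w : Fin d → ℂ) (P : MvPolynomial (Fin d) ℂ) (k : ℕ) :
    (MvPolynomial.aeval (fun i => Polynomial.C (w i) * Polynomial.X) P).coeff k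
      = MvPolynomial.eval w (MvPolynomial.homogeneousComponent k P) := by
  conv_lhs => rw [MvPolynomial.as_sum P]
  conv_rhs => rw [MvPolynomial.as_sum P]
  rw [map_sum, Polynomial.finset_sum_coeff, map_sum, map_sum]
  refine Finset.sum_congr rfl fun α _ => ?_
  rw [MvPolynomial.aeval_monomial]
  have hprod : (α.prod fun i e => (Polynomial.C (w i) * Polynomial.X) ^ e)
      = Polynomial.C (∏ i ∈ α.support, w i ^ α i) * Polynomial.X ^ (α.degree) := by
    rw [Finsupp.prod]
    have h1 : ∀ i ∈ α.support,
        (Polynomial.C (w i) * Polynomial.X) ^ α i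
          = Polynomial.C (w i ^ α i) * Polynomial.X ^ α i := by
      intro i _
      rw [mul_pow, map_pow]
    rw [Finset.prod_congr rfl h1, Finset.prod_mul_distrib, ← map_prod,
      Finset.prod_pow_eq_pow_sum]
    rfl
  rw [hprod, ← mul_assoc, Polynomial.algebraMap_eq, ← map_mul, Polynomial.coeff_C_mul, Polynomial.coeff_X_pow]
  have hcm : (MvPolynomial.homogeneousComponent k) ((MvPolynomial.monomial α)
      (MvPolynomial.coeff α P)) = if α.degree = k
        then (MvPolynomial.monomial α) (MvPolynomial.coeff α P) else 0 := by
    ext β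
    rw [MvPolynomial.coeff_homogeneousComponent]
    by_cases hb : α = β
    · subst hb
      by_cases hd : α.degree = k
      · simp [hd]
      · simp [MvPolynomial.coeff_monomial, hd]
    · by_cases hd : α.degree = k <;> simp [MvPolynomial.coeff_monomial, hb, hd]
  rw [hcm]
  by_cases hdeg : α.degree = k
  · rw [if_pos (by omega : k = α.degree), if_pos hdeg, mul_one, MvPolynomial.eval_monomial]
    rfl
  · rw [if_neg (by omega : ¬ k = α.degree), if_neg hdeg, mul_zero, map_zero]

lemma degree_bound (d n : ℕ) (hn : 1 ≤ n) (f : (Fin d → ℝ) → ℂ) (P : MvPolynomial (Fin d) ℂ)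
    (hP : ∀ x, f x = MvPolynomial.eval (fun i => (x i : ℂ)) P)
    (hrec : ∀ (t x : Fin d → ℝ),
      ∑ j ∈ range (n + 1), (n.choose j : ℂ) * (-1) ^ (n - j) * f (x + j • t) = 0) :
    P.totalDegree ≤ n - 1 := by
  by_contra hD
  push_neg at hD
  have hn_le : n ≤ P.totalDegree := by omega
  set D := P.totalDegree with hDdef
  have hPne : P ≠ 0 := by
    intro h0
    rw [h0, MvPolynomial.totalDegree_zero] at hDdef
    omega
  have hhne : MvPolynomial.homogeneousComponent D P ≠ 0 := by
    obtain ⟨α, hα, hdeg⟩ := Finset.exists_mem_eq_sup P.support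
      (MvPolynomial.support_nonempty.mpr hPne) (fun α : Fin d →₀ ℕ => α.sum fun _ e => e)
    intro h0
    have hc := congrArg (MvPolynomial.coeff α) h0
    rw [MvPolynomial.coeff_homogeneousComponent, MvPolynomial.coeff_zero] at hc
    have hcond : α.degree = D := by
      rw [hDdef, MvPolynomial.totalDegree, hdeg]
      rfl
    rw [if_pos hcond] at hc
    exact MvPolynomial.mem_support_iff.mp hα hc
  obtain ⟨v, hv⟩ : ∃ v : Fin d → ℝ,
      MvPolynomial.eval (fun i => (v i : ℂ)) (MvPolynomial.homogeneousComponent D P) ≠ 0 := by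
    by_contra hall
    push_neg at hall
    exact hhne (mv_eq_zero_of_real d _ hall)
  set w : Fin d → ℂ := fun i => (v i : ℂ) with hw
  set q : ℂ[X] := MvPolynomial.aeval (fun i => Polynomial.C (w i) * Polynomial.X) P with hq
  have hqc : ∀ k, q.coeff k = MvPolynomial.eval w (MvPolynomial.homogeneousComponent k P) :=
    fun k => aeval_line_coeff d w P k
  have hqD : q.coeff D ≠ 0 := by rw [hqc]; exact hv
  have hq0 : q ≠ 0 := fun h0 => hqD (by simp [h0])
  have hqdeg : D ≤ q.natDegree := Polynomial.le_natDegree_of_ne_zero hqD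
  -- evaluation along the line
  have hline : ∀ y : ℝ, q.eval (y : ℂ) = f (y • v) := by
    intro y
    rw [hP, hq, MvPolynomial.aeval_def]
    have hk := MvPolynomial.eval₂_comp_left (Polynomial.evalRingHom (y : ℂ))
      (algebraMap ℂ ℂ[X]) (fun i => Polynomial.C (w i) * Polynomial.X) P
    have hid : (Polynomial.evalRingHom (y : ℂ)).comp (algebraMap ℂ ℂ[X]) = RingHom.id ℂ :=
      RingHom.ext fun a => by simp
    rw [show (Polynomial.eval (y:ℂ) (MvPolynomial.eval₂ (algebraMap ℂ ℂ[X])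
        (fun i => Polynomial.C (w i) * Polynomial.X) P))
      = Polynomial.evalRingHom (y : ℂ) (MvPolynomial.eval₂ (algebraMap ℂ ℂ[X])
        (fun i => Polynomial.C (w i) * Polynomial.X) P) from rfl, hk, hid]
    rw [MvPolynomial.eval₂_id]
    refine congrArg (fun g => MvPolynomial.eval g P) ?_
    funext i
    show Polynomial.eval (y:ℂ) (Polynomial.C (w i) * Polynomial.X) = ((y • v) i : ℂ)
    rw [Polynomial.eval_mul, Polynomial.eval_C, Polynomial.eval_X]
    show w i * (y : ℂ) = ((y * v i : ℝ) : ℂ)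
    push_cast
    ring
  have hzero : (pd 1)^[n] q = 0 := by
    apply Polynomial.eq_zero_of_infinite_isRoot
    refine Set.Infinite.mono ?_
      ((Set.infinite_univ (α := ℝ)).image (fun a _ b _ hc => Complex.ofReal_injective hc))
    rintro _ ⟨y, -, rfl⟩
    show ((pd 1)^[n] q).IsRoot _
    rw [Polynomial.IsRoot, pd_iter_eval]
    have := hrec ((1 : ℝ) • v) (y • v)
    rw [← this]
    refine Finset.sum_congr rfl fun j _ => ?_
    congr 1
    have harg : (y • v + j • (1 : ℝ) • v) = ((y + (j : ℝ))) • v := by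
      rw [one_smul, add_smul, ← Nat.cast_smul_eq_nsmul ℝ j v]
    rw [harg, ← hline (y + j)]
    congr 1
    push_cast [nsmul_eq_mul]
    ring
  exact pd_iter_ne_zero n q hq0 (le_trans hn_le hqdeg) hzero


end MontelAux

open Finset MontelAux in
theorem montel_several_variables (d m s : ℕ) (f : (Fin d → ℝ) → ℂ)
    (hcont : Continuous f) (h : Fin s → (Fin d → ℝ))
    (hdense : Dense ((AddSubgroup.closure (Set.range h) : AddSubgroup (Fin d → ℝ)) :
      Set (Fin d → ℝ)))
    (hf : ∀ k : Fin s, ∀ x : Fin d → ℝ,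
      ∑ j ∈ Finset.range (m + 2),
        ((m + 1).choose j : ℂ) * (-1) ^ (m + 1 - j) * f (x + j • h k) = 0) :
    ∃ P : MvPolynomial (Fin d) ℂ, P.totalDegree ≤ s * m ∧
      ∀ x : Fin d → ℝ, f x = MvPolynomial.eval (fun i => (x i : ℂ)) P := by
  set n : ℕ := s * m + 1 with hn
  have hfE : ∀ k, ((dl (h k)) ^ (m + 1)) f = 0 := by
    intro k
    funext x
    rw [dl_pow_apply]
    exact hf k x
  have hclosure := dl_pow_zero_of_mem_closure m s f h hfE
  have hall : ∀ (t x : Fin d → ℝ),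
      ∑ j ∈ range (n + 1), (n.choose j : ℂ) * (-1) ^ (n - j) * f (x + j • t) = 0 := by
    intro t x
    set F : (Fin d → ℝ) → ℂ :=
      fun z => ∑ j ∈ range (n + 1), (n.choose j : ℂ) * (-1) ^ (n - j) * f (x + j • z) with hF
    have hFcont : Continuous F := by
      apply continuous_finset_sum
      intro j _
      apply Continuous.mul continuous_const
      apply hcont.comp
      have harg : (fun z : Fin d → ℝ => x + j • z)
          = fun z : Fin d → ℝ => x + ((j : ℝ) • z) := by
        funext z
        rw [Nat.cast_smul_eq_nsmul]
      rw [harg]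
      exact continuous_const.add (continuous_id.const_smul (j : ℝ))
    have hcz : Continuous fun _ : Fin d → ℝ => (0 : ℂ) := continuous_const
    have hEq : Set.EqOn F (fun _ => (0 : ℂ))
        ((AddSubgroup.closure (Set.range h) : AddSubgroup (Fin d → ℝ)) :
          Set (Fin d → ℝ)) := by
      intro z hz
      have h1 := congrFun (hclosure z hz) x
      rw [dl_pow_apply] at h1
      exact h1
    exact congrFun (Continuous.ext_on hdense hFcont hcz hEq) t
  obtain ⟨P, hP⟩ := mult d n f hcont hall
  refine ⟨P, ?_, hP⟩
  have hb := degree_bound d n (by omega) f P hP hall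
  omega
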